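/- Let G = (V,E) be a bi-directed (simple) graph. A strictly positive discrete distribution p satisfies the connected set Markov property for G (i.e., for every disconnected vertex set D with components C_1,...,C_r, the marginal p_D factorizes as ∏_k p_{C_k}) if and only if its multivariate logistic parameters satisfy η^M = 0 for every M in the family D of disconnected sets of G. -/

import Mathlib

open Finset
set_option linter.unusedSectionVars false
set_option maxHeartbeats 1000000

/-- The marginal distribution of `p` over the margin `M`, as a function of a full cell
depending only on its `M`-coordinates. -/
noncomputable def marg {V : Type*} [Fintype V] [DecidableEq V] {b : V → ℕ}
    (p : ((v : V) → Fin (b v)) → ℝ) (M : Finset V) (i : (v : V) → Fin (b v)) : ℝ :=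
  ∑ k : (v : V) → Fin (b v), if ∀ v ∈ M, k v = i v then p k else 0

/-- The multivariate logistic parameter `η^M = λ^M_M`: the highest-order log-linear
interaction of the marginal distribution `p_M`, obtained by Möbius inversion of
`log p_M` with baseline cell `(0,...,0)`. -/
noncomputable def mlogit {V : Type*} [Fintype V] [DecidableEq V] {b : V → ℕ}
    (hb : ∀ v, 0 < b v) (p : ((v : V) → Fin (b v)) → ℝ)
    (M : Finset V) (i : (v : V) → Fin (b v)) : ℝ :=
  ∑ L ∈ M.powerset, (-1 : ℝ) ^ (M.card - L.card) *
    Real.log (marg p M (fun v => if v ∈ L then i v else ⟨0, hb v⟩))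

section aux
variable {V : Type*} [Fintype V] [DecidableEq V] {b : V → ℕ} (hb : ∀ v, 0 < b v)

/-- the cell agreeing with `i` on `L` and baseline elsewhere -/
def patt (L : Finset V) (i : (v : V) → Fin (b v)) : (v : V) → Fin (b v) :=
  fun v => if v ∈ L then i v else ⟨0, hb v⟩

lemma patt_congr {L M : Finset V} (hLM : L ⊆ M) {i i' : (v : V) → Fin (b v)}
    (h : ∀ v ∈ M, i v = i' v) : patt hb L i = patt hb L i' := by
  funext v; unfold patt; split
  · exact h v (hLM ‹v ∈ L›)
  · rfl

lemma patt_patt {L T : Finset V} (h : L ⊆ T) (i : (v : V) → Fin (b v)) :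
    patt hb L (patt hb T i) = patt hb L i := by
  funext v; unfold patt; by_cases hv : v ∈ L
  · simp [hv, h hv]
  · simp [hv]

lemma patt_agree {L : Finset V} (i : (v : V) → Fin (b v)) : ∀ v ∈ L, patt hb L i v = i v := by
  intro v hv; unfold patt; simp [hv]

/-- cells that are baseline outside `T` -/
def FF (T : Finset V) : Finset ((v : V) → Fin (b v)) :=
  univ.filter (fun j => patt hb T j = j)

lemma patt_mem_FF {L T : Finset V} (h : L ⊆ T) (i : (v : V) → Fin (b v)) :
    patt hb L i ∈ FF hb T := by
  simp only [FF, mem_filter, mem_univ, true_and]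
  funext v; unfold patt; by_cases hv : v ∈ L
  · simp [hv, h hv]
  · by_cases hv' : v ∈ T <;> simp [hv, hv']

lemma marg_congr {p : ((v : V) → Fin (b v)) → ℝ} {T : Finset V} {i i' : (v : V) → Fin (b v)}
    (h : ∀ v ∈ T, i v = i' v) : marg p T i = marg p T i' := by
  unfold marg
  refine Finset.sum_congr rfl fun k _ => ?_
  refine if_congr ?_ rfl rfl
  constructor
  · intro hk v hv; rw [← h v hv]; exact hk v hv
  · intro hk v hv; rw [h v hv]; exact hk v hv

lemma marg_pos {p : ((v : V) → Fin (b v)) → ℝ} (hpos : ∀ k, 0 < p k)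
    (T : Finset V) (i : (v : V) → Fin (b v)) : 0 < marg p T i := by
  unfold marg
  refine Finset.sum_pos' (fun k _ => ?_) ⟨i, Finset.mem_univ _, ?_⟩
  · split
    · exact (hpos k).le
    · exact le_rfl
  · simp [hpos i]

lemma marg_empty {p : ((v : V) → Fin (b v)) → ℝ} (hsum : ∑ k, p k = 1)
    (i : (v : V) → Fin (b v)) : marg p ∅ i = 1 := by
  unfold marg; simpa using hsum

/-- Möbius transform of `f` on margin `M` at `i` -/
noncomputable def mob (f : ((v : V) → Fin (b v)) → ℝ) (M : Finset V)
    (i : (v : V) → Fin (b v)) : ℝ :=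
  ∑ L ∈ M.powerset, (-1 : ℝ) ^ (M.card - L.card) * f (patt hb L i)

lemma mlogit_eq_mob (p : ((v : V) → Fin (b v)) → ℝ) (M : Finset V) (i : (v : V) → Fin (b v)) :
    mlogit hb p M i = mob hb (fun j => Real.log (marg p M j)) M i := rfl

lemma mob_congr {f : ((v : V) → Fin (b v)) → ℝ} {M : Finset V} {i i' : (v : V) → Fin (b v)}
    (h : ∀ v ∈ M, i v = i' v) : mob hb f M i = mob hb f M i' := by
  unfold mob
  refine Finset.sum_congr rfl fun L hL => ?_
  rw [patt_congr hb (Finset.mem_powerset.1 hL) h]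

lemma mob_congr_fun {f g : ((v : V) → Fin (b v)) → ℝ} (h : ∀ j, f j = g j) (M : Finset V)
    (i : (v : V) → Fin (b v)) : mob hb f M i = mob hb g M i := by
  unfold mob; simp only [h]

lemma mob_sub (f g : ((v : V) → Fin (b v)) → ℝ) (M : Finset V) (i : (v : V) → Fin (b v)) :
    mob hb (fun j => f j - g j) M i = mob hb f M i - mob hb g M i := by
  unfold mob; rw [← Finset.sum_sub_distrib]
  exact Finset.sum_congr rfl fun L _ => by ring

lemma mob_add (f g : ((v : V) → Fin (b v)) → ℝ) (M : Finset V) (i : (v : V) → Fin (b v)) :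
    mob hb (fun j => f j + g j) M i = mob hb f M i + mob hb g M i := by
  unfold mob; rw [← Finset.sum_add_distrib]
  exact Finset.sum_congr rfl fun L _ => by ring


/-- If `f` depends only on coordinates in `T` and some `v ∈ M` lies outside `T`,
then the Möbius transform over `M` vanishes. -/
lemma mob_eq_zero {f : ((v : V) → Fin (b v)) → ℝ} {T : Finset V}
    (hT : ∀ j j' : (v : V) → Fin (b v), (∀ u ∈ T, j u = j' u) → f j = f j')
    {M : Finset V} {v : V} (hv : v ∈ M) (hvT : v ∉ T) (i : (v : V) → Fin (b v)) :
    mob hb f M i = 0 := by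
  unfold mob
  have hM : M = insert v (M.erase v) := (Finset.insert_erase hv).symm
  have hvne : v ∉ M.erase v := Finset.notMem_erase v M
  rw [hM, Finset.powerset_insert, Finset.sum_union, Finset.sum_image]
  · rw [← Finset.sum_add_distrib]
    refine Finset.sum_eq_zero fun L hL => ?_
    rw [Finset.mem_powerset] at hL
    have hvL : v ∉ L := fun h => hvne (hL h)
    have hcard : L.card < (insert v (M.erase v)).card := by
      rw [Finset.card_insert_of_notMem hvne]
      have := Finset.card_le_card hL
      omega
    have hci : (insert v L).card = L.card + 1 := Finset.card_insert_of_notMem hvL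
    have hfe : f (patt hb L i) = f (patt hb (insert v L) i) := by
      refine hT _ _ fun u hu => ?_
      have huv : u ≠ v := fun h => hvT (h ▸ hu)
      unfold patt
      simp [Finset.mem_insert, huv]
    have hsign : (-1 : ℝ) ^ ((insert v (M.erase v)).card - (insert v L).card)
        = -(-1 : ℝ) ^ ((insert v (M.erase v)).card - L.card) := by
      rw [hci]
      have h1 : (insert v (M.erase v)).card - L.card
          = ((insert v (M.erase v)).card - (L.card + 1)) + 1 := by omega
      rw [h1, pow_succ]
      ring
    rw [hsign, ← hfe]
    ring
  · intro L hL L' hL' hins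
    rw [Finset.mem_coe, Finset.mem_powerset] at hL hL'
    have : ∀ x ∈ L, x ∈ L' := by
      intro x hx
      have : x ∈ insert v L' := hins ▸ Finset.mem_insert_of_mem hx
      rcases Finset.mem_insert.1 this with h | h
      · exact absurd (h ▸ hx) (fun hh => hvne (hL hh))
      · exact h
    have h2 : ∀ x ∈ L', x ∈ L := by
      intro x hx
      have : x ∈ insert v L := hins ▸ Finset.mem_insert_of_mem hx
      rcases Finset.mem_insert.1 this with h | h
      · exact absurd (h ▸ hx) (fun hh => hvne (hL' hh))
      · exact h
    exact Finset.Subset.antisymm this h2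
  · rw [Finset.disjoint_right]
    intro L hL
    rw [Finset.mem_image] at hL
    obtain ⟨K, hK, rfl⟩ := hL
    rw [Finset.mem_powerset]
    intro hsub
    exact hvne (hsub (Finset.mem_insert_self v K))


lemma coeff_lemma {L S : Finset V} (hL : L ⊆ S) :
    (∑ M ∈ S.powerset, if L ⊆ M then (-1 : ℝ) ^ (M.card - L.card) else 0)
      = if L = S then 1 else 0 := by
  rw [← Finset.sum_filter]
  have h1 : ∑ M ∈ S.powerset.filter (fun M => L ⊆ M), (-1 : ℝ) ^ (M.card - L.card)
      = ∑ K ∈ (S \ L).powerset, (-1 : ℝ) ^ K.card := by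
    refine Finset.sum_nbij' (fun M => M \ L) (fun K => K ∪ L) ?_ ?_ ?_ ?_ ?_
    · intro M hM
      rw [Finset.mem_filter, Finset.mem_powerset] at hM
      rw [Finset.mem_powerset]
      exact Finset.sdiff_subset_sdiff hM.1 le_rfl
    · intro K hK
      rw [Finset.mem_powerset] at hK
      rw [Finset.mem_filter, Finset.mem_powerset]
      constructor
      · exact Finset.union_subset (hK.trans (Finset.sdiff_subset)) hL
      · exact Finset.subset_union_right
    · intro M hM
      rw [Finset.mem_filter, Finset.mem_powerset] at hM
      exact Finset.sdiff_union_of_subset hM.2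
    · intro K hK
      rw [Finset.mem_powerset] at hK
      have : Disjoint K L := Finset.disjoint_left.2 fun x hx hxL =>
        (Finset.mem_sdiff.1 (hK hx)).2 hxL
      rw [Finset.union_sdiff_cancel_right this]
    · intro M hM
      rw [Finset.mem_filter, Finset.mem_powerset] at hM
      rw [Finset.card_sdiff_of_subset hM.2]
  rw [h1]
  have h2 : (∑ K ∈ (S \ L).powerset, (-1 : ℝ) ^ K.card)
      = ((∑ K ∈ (S \ L).powerset, (-1 : ℤ) ^ K.card : ℤ) : ℝ) := by push_cast; rfl
  rw [h2, Finset.sum_powerset_neg_one_pow_card]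
  by_cases h : S \ L = ∅
  · have : L = S := Finset.Subset.antisymm hL (fun x hx => by
      by_contra hxL
      exact (Finset.notMem_empty x) (h ▸ Finset.mem_sdiff.2 ⟨hx, hxL⟩))
    simp [h, this]
  · have : L ≠ S := fun he => h (by rw [he, Finset.sdiff_self])
    simp [h, this]

/-- Möbius recovery: summing the transforms over all subsets of `S` gives back `f (patt S i)`. -/
lemma sum_mob (f : ((v : V) → Fin (b v)) → ℝ) (S : Finset V) (i : (v : V) → Fin (b v)) :
    ∑ M ∈ S.powerset, mob hb f M i = f (patt hb S i) := by
  unfold mob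
  have key : ∀ M ∈ S.powerset, ∑ L ∈ M.powerset, (-1 : ℝ) ^ (M.card - L.card) * f (patt hb L i)
      = ∑ L ∈ S.powerset, if L ⊆ M then (-1 : ℝ) ^ (M.card - L.card) * f (patt hb L i) else 0 := by
    intro M hM
    rw [Finset.mem_powerset] at hM
    rw [← Finset.sum_subset (Finset.powerset_mono.2 hM) (fun L _ hL =>
      if_neg (by simpa [Finset.mem_powerset] using hL))]
    exact Finset.sum_congr rfl fun L hL => (if_pos (Finset.mem_powerset.1 hL)).symm
  rw [Finset.sum_congr rfl key, Finset.sum_comm]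
  have key2 : ∀ L ∈ S.powerset,
      (∑ M ∈ S.powerset, if L ⊆ M then (-1 : ℝ) ^ (M.card - L.card) * f (patt hb L i) else 0)
      = (if L = S then 1 else 0) * f (patt hb L i) := by
    intro L hL
    have : ∀ M : Finset V, (if L ⊆ M then (-1 : ℝ) ^ (M.card - L.card) * f (patt hb L i) else 0)
        = (if L ⊆ M then (-1 : ℝ) ^ (M.card - L.card) else 0) * f (patt hb L i) := by
      intro M; split <;> simp
    simp only [this, ← Finset.sum_mul]
    rw [coeff_lemma (Finset.mem_powerset.1 hL)]
  rw [Finset.sum_congr rfl key2, Finset.sum_eq_single S]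
  · simp
  · intro L _ hLS; simp [hLS]
  · intro h; exact absurd (Finset.mem_powerset.2 le_rfl) h


lemma mem_FF_iff {T : Finset V} {j : (v : V) → Fin (b v)} :
    j ∈ FF hb T ↔ ∀ v, v ∉ T → j v = ⟨0, hb v⟩ := by
  simp only [FF, mem_filter, mem_univ, true_and]
  constructor
  · intro h v hv
    have := congrFun h v
    simp only [patt, if_neg hv] at this
    exact this.symm
  · intro h
    funext v
    by_cases hv : v ∈ T
    · simp [patt, hv]
    · simp [patt, hv, h v hv]

/-- Resummation: a sum against `p` of a function depending only on `T`-coordinates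
equals a sum against the `T`-marginal over baseline-padded cells. -/
lemma resum (p : ((v : V) → Fin (b v)) → ℝ) (T : Finset V) (φ : ((v : V) → Fin (b v)) → ℝ)
    (hφ : ∀ j, φ (patt hb T j) = φ j) :
    ∑ k, p k * φ k = ∑ j ∈ FF hb T, marg p T j * φ j := by
  have step : ∀ j ∈ FF hb T, marg p T j * φ j
      = ∑ k, if ∀ v ∈ T, k v = j v then p k * φ j else 0 := by
    intro j _
    unfold marg
    rw [Finset.sum_mul]
    refine Finset.sum_congr rfl fun k _ => ?_
    split <;> simp
  rw [Finset.sum_congr rfl step, Finset.sum_comm]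
  refine Finset.sum_congr rfl fun k _ => ?_
  rw [Finset.sum_eq_single (patt hb T k)]
  · rw [if_pos fun v hv => (by rw [patt, if_pos hv] : patt hb T k v = k v).symm, hφ]
  · intro j hj hne
    refine if_neg fun hc => hne ?_
    funext v
    by_cases hv : v ∈ T
    · rw [← hc v hv, patt, if_pos hv]
    · rw [(mem_FF_iff hb).1 hj v hv, patt, if_neg hv]
  · intro h
    exact absurd (by
      rw [mem_FF_iff]
      intro v hv
      simp [patt, hv]) h

/-- the cell taking `k`'s values on `A` and `l`'s values elsewhere -/
def mix (A : Finset V) (k l : (v : V) → Fin (b v)) : (v : V) → Fin (b v) :=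
  fun v => if v ∈ A then k v else l v

/-- Double resummation for the product measure. -/
lemma resum2 (p : ((v : V) → Fin (b v)) → ℝ) {A B M : Finset V}
    (hAB : Disjoint A B) (hM : M ⊆ A ∪ B) (h : ((v : V) → Fin (b v)) → ℝ)
    (hh : ∀ j j', (∀ v ∈ M, j v = j' v) → h j = h j') :
    ∑ k, p k * (∑ l, p l * h (mix A k l))
      = ∑ j ∈ FF hb M, marg p (M ∩ A) j * (marg p (M ∩ B) j * h j) := by
  have memAB : ∀ v ∈ M, v ∉ A → v ∈ B := by
    intro v hv hvA
    rcases Finset.mem_union.1 (hM hv) with h' | h'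
    · exact absurd h' hvA
    · exact h'
  -- first resummation in k
  have step1 : ∑ k, p k * (∑ l, p l * h (mix A k l))
      = ∑ j ∈ FF hb (M ∩ A), marg p (M ∩ A) j * (∑ l, p l * h (mix A j l)) := by
    refine resum hb p (M ∩ A) _ fun j => ?_
    refine Finset.sum_congr rfl fun l _ => ?_
    congr 1
    refine hh _ _ fun v hv => ?_
    by_cases hvA : v ∈ A
    · simp [mix, patt, hvA, Finset.mem_inter.2 ⟨hv, hvA⟩]
    · simp [mix, hvA]
  -- second resummation in l
  have step2 : ∀ j, ∑ l, p l * h (mix A j l)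
      = ∑ j' ∈ FF hb (M ∩ B), marg p (M ∩ B) j' * h (mix A j j') := by
    intro j
    refine resum hb p (M ∩ B) _ fun l => ?_
    refine hh _ _ fun v hv => ?_
    by_cases hvA : v ∈ A
    · simp [mix, hvA]
    · have hvB : v ∈ M ∩ B := Finset.mem_inter.2 ⟨hv, memAB v hv hvA⟩
      simp [mix, patt, hvA, hvB]
  rw [step1]
  simp only [step2, Finset.mul_sum]
  rw [← Finset.sum_product']
  refine Finset.sum_nbij' (fun jj => mix A jj.1 jj.2)
    (fun j => (patt hb (M ∩ A) j, patt hb (M ∩ B) j)) ?_ ?_ ?_ ?_ ?_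
  · rintro ⟨j, j'⟩ hjj
    rw [Finset.mem_product] at hjj
    rw [mem_FF_iff]
    intro v hv
    by_cases hvA : v ∈ A
    · have : v ∉ M ∩ A := fun hc => hv (Finset.mem_inter.1 hc).1
      simpa [mix, hvA] using (mem_FF_iff hb).1 hjj.1 v this
    · have : v ∉ M ∩ B := fun hc => hv (Finset.mem_inter.1 hc).1
      simpa [mix, hvA] using (mem_FF_iff hb).1 hjj.2 v this
  · intro j hj
    rw [Finset.mem_product]
    constructor
    · rw [mem_FF_iff]; intro v hv; simp [patt, hv]
    · rw [mem_FF_iff]; intro v hv; simp [patt, hv]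
  · rintro ⟨j, j'⟩ hjj
    rw [Finset.mem_product] at hjj
    have h1 : patt hb (M ∩ A) (mix A j j') = j := by
      funext v
      by_cases hv : v ∈ M ∩ A
      · have hvA : v ∈ A := (Finset.mem_inter.1 hv).2
        simp [patt, mix, hv, hvA]
      · simp only [patt, if_neg hv]
        exact ((mem_FF_iff hb).1 hjj.1 v hv).symm
    have h2 : patt hb (M ∩ B) (mix A j j') = j' := by
      funext v
      by_cases hv : v ∈ M ∩ B
      · have hvB : v ∈ B := (Finset.mem_inter.1 hv).2
        have hvA : v ∉ A := fun hc => (Finset.disjoint_left.1 hAB hc) hvB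
        simp [patt, mix, hv, hvA]
      · simp only [patt, if_neg hv]
        exact ((mem_FF_iff hb).1 hjj.2 v hv).symm
    simp [h1, h2]
  · intro j hj
    funext v
    by_cases hvA : v ∈ A
    · by_cases hv : v ∈ M ∩ A
      · simp [mix, patt, hvA, hv]
      · have hvM : v ∉ M := fun hc => hv (Finset.mem_inter.2 ⟨hc, hvA⟩)
        simp [mix, patt, hvA, hv, ((mem_FF_iff hb).1 hj v hvM)]
    · by_cases hv : v ∈ M ∩ B
      · simp [mix, patt, hvA, hv]
      · have hvM : v ∉ M := fun hc => hv (Finset.mem_inter.2 ⟨hc, memAB v hc hvA⟩)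
        simp [mix, patt, hvA, hv, ((mem_FF_iff hb).1 hj v hvM)]
  · rintro ⟨j, j'⟩ hjj
    rw [Finset.mem_product] at hjj
    have e1 : marg p (M ∩ A) j = marg p (M ∩ A) (mix A j j') := by
      refine marg_congr fun v hv => ?_
      have hvA : v ∈ A := (Finset.mem_inter.1 hv).2
      simp [mix, hvA]
    have e2 : marg p (M ∩ B) j' = marg p (M ∩ B) (mix A j j') := by
      refine marg_congr fun v hv => ?_
      have hvB : v ∈ B := (Finset.mem_inter.1 hv).2
      have hvA : v ∉ A := fun hc => (Finset.disjoint_left.1 hAB hc) hvB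
      simp [mix, hvA]
    rw [e1, e2]


lemma loglem {x y : ℝ} (hx : 0 < x) (hy : 0 < y) :
    0 ≤ (x - y) * (Real.log x - Real.log y) := by
  rcases le_total x y with h | h
  · have hl : Real.log x ≤ Real.log y := Real.log_le_log hx h
    have : (x - y) * (Real.log x - Real.log y) = (y - x) * (Real.log y - Real.log x) := by ring
    rw [this]
    exact mul_nonneg (by linarith) (by linarith)
  · have hl : Real.log y ≤ Real.log x := Real.log_le_log hy h
    exact mul_nonneg (by linarith) (by linarith)

lemma loglem_eq {x y : ℝ} (hx : 0 < x) (hy : 0 < y)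
    (h : (x - y) * (Real.log x - Real.log y) = 0) : x = y := by
  by_contra hne
  rcases lt_or_gt_of_ne hne with hlt | hlt
  · have hl : Real.log x < Real.log y := Real.log_lt_log hx hlt
    have : 0 < (x - y) * (Real.log x - Real.log y) := by nlinarith
    linarith
  · have hl : Real.log y < Real.log x := Real.log_lt_log hy hlt
    have : 0 < (x - y) * (Real.log x - Real.log y) := by nlinarith
    linarith

/-- The analytic core: if all mixing multivariate logistic parameters vanish, the
marginal over `A ∪ B` factorizes. -/
lemma step1 (p : ((v : V) → Fin (b v)) → ℝ) (hpos : ∀ k, 0 < p k) (hsum : ∑ k, p k = 1) :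
    ∀ n : ℕ, ∀ A B : Finset V, (A ∪ B).card ≤ n → Disjoint A B →
    (∀ M, M ⊆ A ∪ B → (M ∩ A).Nonempty → (M ∩ B).Nonempty → ∀ i, mlogit hb p M i = 0) →
    ∀ i, marg p (A ∪ B) i = marg p A i * marg p B i := by
  intro n
  induction n with
  | zero =>
    intro A B hcard hAB H i
    rw [Nat.le_zero, Finset.card_eq_zero, Finset.union_eq_empty] at hcard
    rw [hcard.1, hcard.2]
    simp [marg_empty hsum]
  | succ n IH =>
    intro A B hcard hAB H i
    by_cases hA : A = ∅
    · subst hA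
      rw [Finset.empty_union, marg_empty hsum]
      ring
    by_cases hB : B = ∅
    · subst hB
      rw [Finset.union_empty, marg_empty hsum]
      ring
    replace hA := Finset.nonempty_of_ne_empty hA
    replace hB := Finset.nonempty_of_ne_empty hB
    set D := A ∪ B with hD
    set g : ((v : V) → Fin (b v)) → ℝ := fun j =>
      Real.log (marg p D j) - (Real.log (marg p A j) + Real.log (marg p B j)) with hg
    have hDA : D ∩ A = A := by rw [hD, Finset.union_inter_cancel_left]
    have hDB : D ∩ B = B := by rw [hD, Finset.union_inter_cancel_right]
    -- the top Möbius transform of g over D vanishes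
    have keyD : ∀ i, mob hb g D i = 0 := by
      intro i
      rw [hg, mob_sub, mob_add]
      have h1 : mob hb (fun j => Real.log (marg p D j)) D i = 0 := by
        rw [← mlogit_eq_mob]
        exact H D le_rfl (by rw [hDA]; exact hA) (by rw [hDB]; exact hB) i
      have h2 : mob hb (fun j => Real.log (marg p A j)) D i = 0 := by
        obtain ⟨v, hv⟩ := hB
        exact mob_eq_zero hb (fun j j' hjj => by rw [marg_congr hjj])
          (Finset.mem_union_right _ hv) (Finset.disjoint_right.1 hAB hv) i
      have h3 : mob hb (fun j => Real.log (marg p B j)) D i = 0 := by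
        obtain ⟨v, hv⟩ := hA
        exact mob_eq_zero hb (fun j j' hjj => by rw [marg_congr hjj])
          (Finset.mem_union_left _ hv) (Finset.disjoint_left.1 hAB hv) i
      rw [h1, h2, h3]
      ring
    -- g depends only on D-coordinates
    have hgD : ∀ j j', (∀ v ∈ D, j v = j' v) → g j = g j' := by
      intro j j' hjj
      have hA' : ∀ v ∈ A, j v = j' v := fun v hv => hjj v (Finset.mem_union_left _ hv)
      have hB' : ∀ v ∈ B, j v = j' v := fun v hv => hjj v (Finset.mem_union_right _ hv)
      rw [hg]
      simp only [marg_congr hjj, marg_congr hA', marg_congr hB']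
    -- for each proper subset M of D the two pairings against mob g M agree
    have Tsum : ∀ M ∈ D.powerset, ∑ k, p k * mob hb g M k
        = ∑ k, p k * (∑ l, p l * mob hb g M (mix A k l)) := by
      intro M hM
      rw [Finset.mem_powerset] at hM
      by_cases hMD : M = D
      · subst hMD
        simp only [keyD, mul_zero, Finset.sum_const_zero]
      -- M is a proper subset: use the inductive hypothesis
      have hMcard : M.card ≤ n := by
        have hss : M ⊂ D := Finset.ssubset_iff_subset_ne.2 ⟨hM, hMD⟩
        have := Finset.card_lt_card hss
        omega
      have hMunion : M ∩ A ∪ M ∩ B = M := by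
        rw [← Finset.inter_union_distrib_left, Finset.inter_eq_left.2 hM]
      have hfac : ∀ j, marg p M j = marg p (M ∩ A) j * marg p (M ∩ B) j := by
        intro j
        have := IH (M ∩ A) (M ∩ B) (by rw [hMunion]; exact hMcard)
          (hAB.mono Finset.inter_subset_right Finset.inter_subset_right)
          (fun M' hM' h1 h2 => H M' (by rw [hMunion] at hM'; exact hM'.trans hM)
            (h1.mono (Finset.inter_subset_inter le_rfl Finset.inter_subset_right))
            (h2.mono (Finset.inter_subset_inter le_rfl Finset.inter_subset_right))) j
        rwa [hMunion] at this
      have hmobM : ∀ j j', (∀ v ∈ M, j v = j' v) → mob hb g M j = mob hb g M j' :=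
        fun j j' hjj => mob_congr hb hjj
      have lhs : ∑ k, p k * mob hb g M k = ∑ j ∈ FF hb M, marg p M j * mob hb g M j := by
        refine resum hb p M _ fun j => ?_
        exact hmobM _ _ fun v hv => patt_agree hb j v hv
      have rhs : ∑ k, p k * (∑ l, p l * mob hb g M (mix A k l))
          = ∑ j ∈ FF hb M, marg p (M ∩ A) j * (marg p (M ∩ B) j * mob hb g M j) :=
        resum2 hb p hAB hM _ hmobM
      rw [lhs, rhs]
      refine Finset.sum_congr rfl fun j _ => ?_
      rw [hfac j]
      ring
    -- g recovered from its Möbius transforms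
    have hrec : ∀ j, g j = ∑ M ∈ D.powerset, mob hb g M j := by
      intro j
      rw [sum_mob]
      exact (hgD _ _ fun v hv => patt_agree hb j v hv).symm
    -- assembling: the self-pairing and the cross-pairing of g agree
    have main : ∑ k, p k * g k = ∑ k, p k * (∑ l, p l * g (mix A k l)) := by
      have expand1 : ∀ k, p k * g k = ∑ M ∈ D.powerset, p k * mob hb g M k := fun k => by
        rw [← Finset.mul_sum, ← hrec]
      have expand2 : ∀ k l : (v : V) → Fin (b v), p k * (p l * g (mix A k l))
          = ∑ M ∈ D.powerset, p k * (p l * mob hb g M (mix A k l)) := fun k l => by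
        simp only [← Finset.mul_sum]
        rw [← hrec]
      calc ∑ k, p k * g k = ∑ M ∈ D.powerset, ∑ k, p k * mob hb g M k := by
            simp only [expand1]
            exact Finset.sum_comm
        _ = ∑ M ∈ D.powerset, ∑ k, p k * (∑ l, p l * mob hb g M (mix A k l)) :=
            Finset.sum_congr rfl Tsum
        _ = ∑ M ∈ D.powerset, ∑ k, ∑ l, p k * (p l * mob hb g M (mix A k l)) := by
            simp only [Finset.mul_sum]
        _ = ∑ k, ∑ l, ∑ M ∈ D.powerset, p k * (p l * mob hb g M (mix A k l)) := by
            rw [Finset.sum_comm]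
            exact Finset.sum_congr rfl fun k _ => Finset.sum_comm
        _ = ∑ k, ∑ l, p k * (p l * g (mix A k l)) := by
            simp only [← expand2]
        _ = ∑ k, p k * (∑ l, p l * g (mix A k l)) := by
            simp only [Finset.mul_sum]
    -- rewrite both sides as sums over baseline-padded cells
    have lhs2 : ∑ k, p k * g k = ∑ j ∈ FF hb D, marg p D j * g j :=
      resum hb p D g fun j => hgD _ _ fun v hv => patt_agree hb j v hv
    have rhs2 : ∑ k, p k * (∑ l, p l * g (mix A k l))
        = ∑ j ∈ FF hb D, marg p A j * (marg p B j * g j) := by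
      have := resum2 hb p hAB (le_rfl : D ⊆ A ∪ B) g hgD
      rwa [hDA, hDB] at this
    have zero : ∑ j ∈ FF hb D, (marg p D j - marg p A j * marg p B j) * g j = 0 := by
      have hmain := main
      rw [lhs2, rhs2] at hmain
      have hsplit : ∑ j ∈ FF hb D, (marg p D j - marg p A j * marg p B j) * g j
          = ∑ j ∈ FF hb D, marg p D j * g j
            - ∑ j ∈ FF hb D, marg p A j * (marg p B j * g j) := by
        rw [← Finset.sum_sub_distrib]
        exact Finset.sum_congr rfl fun j _ => by ring
      rw [hsplit, hmain, sub_self]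
    have glog : ∀ j, g j = Real.log (marg p D j) - Real.log (marg p A j * marg p B j) := by
      intro j
      rw [hg, Real.log_mul (ne_of_gt (marg_pos hpos _ _)) (ne_of_gt (marg_pos hpos _ _))]
    have hnn : ∀ j ∈ FF hb D, 0 ≤ (marg p D j - marg p A j * marg p B j) * g j := by
      intro j _
      rw [glog j]
      exact loglem (marg_pos hpos _ _) (mul_pos (marg_pos hpos _ _) (marg_pos hpos _ _))
    have each : ∀ j ∈ FF hb D, marg p D j = marg p A j * marg p B j := by
      intro j hj
      have h0 := (Finset.sum_eq_zero_iff_of_nonneg hnn).1 zero j hj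
      rw [glog j] at h0
      exact loglem_eq (marg_pos hpos _ _) (mul_pos (marg_pos hpos _ _) (marg_pos hpos _ _)) h0
    -- conclude at `i` by passing through the baseline-padded cell
    have hpatt : ∀ T : Finset V, T ⊆ D → marg p T (patt hb D i) = marg p T i :=
      fun T hT => marg_congr fun v hv => patt_agree hb i v (hT hv)
    rw [← hpatt D le_rfl, ← hpatt A Finset.subset_union_left,
      ← hpatt B Finset.subset_union_right]
    exact each (patt hb D i) (patt_mem_FF hb le_rfl i)
lemma mob_sum {ι : Type*} (s : Finset ι) (f : ι → ((v : V) → Fin (b v)) → ℝ)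
    (M : Finset V) (i : (v : V) → Fin (b v)) :
    mob hb (fun j => ∑ k ∈ s, f k j) M i = ∑ k ∈ s, mob hb (f k) M i := by
  unfold mob
  rw [Finset.sum_comm]
  exact Finset.sum_congr rfl fun L _ => by rw [Finset.mul_sum]

/-- A set split into two nonempty parts with no edges between them induces a
disconnected graph. -/
lemma disc {G : SimpleGraph V} {X Y M : Finset V} (hX : X.Nonempty) (hY : Y.Nonempty)
    (hd : Disjoint X Y) (hM : M = X ∪ Y)
    (hadj : ∀ u ∈ X, ∀ v ∈ Y, ¬ G.Adj u v) :
    ¬ (G.induce ((M : Finset V) : Set V)).Connected := by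
  intro hconn
  obtain ⟨x, hx⟩ := hX
  obtain ⟨y, hy⟩ := hY
  have hxM : x ∈ M := hM ▸ Finset.mem_union_left _ hx
  have hyM : y ∈ M := hM ▸ Finset.mem_union_right _ hy
  obtain ⟨w⟩ := hconn.preconnected ⟨x, by simpa using hxM⟩ ⟨y, by simpa using hyM⟩
  have claim : ∀ (a c : ((M : Finset V) : Set V)) (_ : (G.induce ((M : Finset V) : Set V)).Walk a c),
      (a : V) ∈ X → (c : V) ∈ X := by
    intro a c w
    induction w with
    | nil => exact id
    | @cons u t c h q ih =>
      intro hu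
      apply ih
      by_contra ht
      have htM : (t : V) ∈ M := by simpa using t.2
      have htM' : (t : V) ∈ X ∪ Y := by rw [← hM]; exact htM
      have htY : (t : V) ∈ Y := by
        rcases Finset.mem_union.1 htM' with h' | h'
        · exact absurd h' ht
        · exact h'
      exact hadj _ hu _ htY h
  have hyX : y ∈ X := claim _ _ w hx
  exact (Finset.disjoint_left.1 hd hyX) hy
lemma splitlem (G : SimpleGraph V) (p : ((v : V) → Fin (b v)) → ℝ)
    (hpos : ∀ k, 0 < p k) (hsum : ∑ k, p k = 1)
    (Hη : ∀ M : Finset V, ((M : Set V)).Nonempty →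
      ¬ (G.induce ((M : Finset V) : Set V)).Connected → ∀ i, mlogit hb p M i = 0)
    {A B : Finset V} (hAB : Disjoint A B)
    (hadj : ∀ u ∈ A, ∀ v ∈ B, ¬ G.Adj u v) :
    ∀ i, marg p (A ∪ B) i = marg p A i * marg p B i := by
  intro i
  refine step1 hb p hpos hsum (A ∪ B).card A B le_rfl hAB ?_ i
  intro M hM hMA hMB i'
  refine Hη M ?_ ?_ i'
  · exact Finset.coe_nonempty.2 (hMA.mono Finset.inter_subset_left)
  · refine disc hMA hMB (hAB.mono Finset.inter_subset_right Finset.inter_subset_right)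
      (by rw [← Finset.inter_union_distrib_left, Finset.inter_eq_left.2 hM] :
        M = M ∩ A ∪ M ∩ B) ?_
    intro u hu v hv
    exact hadj u (Finset.mem_inter.1 hu).2 v (Finset.mem_inter.1 hv).2

lemma backward (G : SimpleGraph V) (p : ((v : V) → Fin (b v)) → ℝ)
    (hpos : ∀ k, 0 < p k) (hsum : ∑ k, p k = 1)
    (Hη : ∀ M : Finset V, ((M : Set V)).Nonempty →
      ¬ (G.induce ((M : Finset V) : Set V)).Connected → ∀ i, mlogit hb p M i = 0) :
    ∀ (r : ℕ), ∀ C : Fin r → Finset V, 2 ≤ r → (∀ k, (C k).Nonempty) →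
      (∀ j k, j ≠ k → Disjoint (C j) (C k)) →
      (∀ j k, j ≠ k → ∀ u ∈ C j, ∀ v ∈ C k, ¬ G.Adj u v) →
      ∀ i, marg p (Finset.univ.biUnion C) i = ∏ k, marg p (C k) i := by
  intro r
  induction r with
  | zero => intro C hr; exact absurd hr (by omega)
  | succ r IH =>
    intro C hr hne hdis hadj i
    by_cases hr2 : r < 2
    · have hr1 : r = 1 := by omega
      subst hr1
      have hU : (univ : Finset (Fin 2)).biUnion C = C 0 ∪ C 1 := by
        ext v; simp [Fin.exists_fin_two]
      have h01 : (0 : Fin 2) ≠ 1 := by decide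
      rw [hU, Fin.prod_univ_two]
      exact splitlem hb G p hpos hsum Hη (hdis 0 1 h01) (hadj 0 1 h01) i
    · push_neg at hr2
      have hU : (univ : Finset (Fin (r + 1))).biUnion C
          = C 0 ∪ (univ : Finset (Fin r)).biUnion (fun k => C k.succ) := by
        ext v; simp [Fin.exists_fin_succ]
      have hdisj : Disjoint (C 0) ((univ : Finset (Fin r)).biUnion (fun k => C k.succ)) := by
        rw [Finset.disjoint_biUnion_right]
        intro k _
        exact hdis 0 k.succ (Fin.succ_ne_zero k).symm
      have hadj' : ∀ u ∈ C 0, ∀ v ∈ (univ : Finset (Fin r)).biUnion (fun k => C k.succ),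
          ¬ G.Adj u v := by
        intro u hu v hv
        obtain ⟨k, _, hvk⟩ := Finset.mem_biUnion.1 hv
        exact hadj 0 k.succ (Fin.succ_ne_zero k).symm u hu v hvk
      rw [hU, Fin.prod_univ_succ,
        splitlem hb G p hpos hsum Hη hdisj hadj' i]
      congr 1
      exact IH (fun k => C k.succ) hr2 (fun k => hne k.succ)
        (fun j k hjk => hdis j.succ k.succ (fun h => hjk (Fin.succ_injective _ h)))
        (fun j k hjk => hadj j.succ k.succ (fun h => hjk (Fin.succ_injective _ h))) i
lemma comp_induce_connected (G : SimpleGraph V) (W : Set V)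
    (c : (G.induce W).ConnectedComponent) :
    (G.induce (Subtype.val '' c.supp)).Connected := by
  classical
  set S : Set V := Subtype.val '' c.supp with hS
  obtain ⟨x0, hx0⟩ := c.exists_rep
  have hx0S : (x0 : V) ∈ S := ⟨x0, hx0, rfl⟩
  rw [SimpleGraph.connected_iff]
  refine ⟨?_, ⟨⟨x0, hx0S⟩⟩⟩
  have claim : ∀ (x y : W) (_ : (G.induce W).Walk x y)
      (hx : x ∈ c.supp) (hy : y ∈ c.supp),
      (G.induce S).Reachable ⟨x.1, ⟨x, hx, rfl⟩⟩ ⟨y.1, ⟨y, hy, rfl⟩⟩ := by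
    intro x y w
    induction w with
    | nil => intro hx hy; exact SimpleGraph.Reachable.refl _
    | @cons u t z h q ih =>
      intro hu hz
      have ht : t ∈ c.supp := by
        rw [SimpleGraph.ConnectedComponent.mem_supp_iff] at hu ⊢
        rw [← hu]
        exact (SimpleGraph.ConnectedComponent.connectedComponentMk_eq_of_adj h).symm
      have hadj : (G.induce S).Adj ⟨u.1, ⟨u, hu, rfl⟩⟩ ⟨t.1, ⟨t, ht, rfl⟩⟩ := h
      exact hadj.reachable.trans (ih ht hz)
  intro a b
  obtain ⟨x, hx, hxa⟩ := a.2
  obtain ⟨y, hy, hyb⟩ := b.2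
  have hre : (G.induce W).Reachable x y := by
    rw [SimpleGraph.ConnectedComponent.mem_supp_iff] at hx hy
    exact SimpleGraph.ConnectedComponent.exact (hx.trans hy.symm)
  obtain ⟨w⟩ := hre
  have := claim x y w hx hy
  have ha : a = ⟨x.1, ⟨x, hx, rfl⟩⟩ := Subtype.ext hxa.symm
  have hb' : b = ⟨y.1, ⟨y, hy, rfl⟩⟩ := Subtype.ext hyb.symm
  rw [ha, hb']
  exact this
lemma components_exist (G : SimpleGraph V) (M : Finset V) (hne : ((M : Set V)).Nonempty)
    (hnc : ¬ (G.induce ((M : Finset V) : Set V)).Connected) :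
    ∃ (r : ℕ) (C : Fin r → Finset V), 2 ≤ r ∧ (∀ k, (C k).Nonempty) ∧
      (∀ k, (G.induce ((C k : Finset V) : Set V)).Connected) ∧
      (∀ j k, j ≠ k → Disjoint (C j) (C k)) ∧
      (∀ j k, j ≠ k → ∀ u ∈ C j, ∀ v ∈ C k, ¬ G.Adj u v) ∧
      M = Finset.univ.biUnion C := by
  classical
  set W : Set V := ((M : Finset V) : Set V) with hW
  set GM := G.induce W with hGM
  have hfin : Finite GM.ConnectedComponent := Quot.finite _
  obtain ⟨r, ⟨e⟩⟩ := Finite.exists_equiv_fin GM.ConnectedComponent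
  -- at least two components
  have hnontriv : Nontrivial GM.ConnectedComponent := by
    rw [SimpleGraph.connected_iff] at hnc
    push_neg at hnc
    have hpre : ¬ GM.Preconnected := by
      intro hp
      exact (hnc hp).elim (Set.Nonempty.to_subtype hne).some
    rw [SimpleGraph.Preconnected] at hpre
    push_neg at hpre
    obtain ⟨x, y, hxy⟩ := hpre
    exact ⟨GM.connectedComponentMk x, GM.connectedComponentMk y,
      fun h => hxy (SimpleGraph.ConnectedComponent.exact h)⟩
  have hr : 2 ≤ r := by
    have : Nontrivial (Fin r) := e.symm.nontrivial
    exact Fin.nontrivial_iff_two_le.1 this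
  set S : Fin r → Set V := fun k => Subtype.val '' (e.symm k).supp with hSdef
  set C : Fin r → Finset V := fun k => (Set.toFinite (S k)).toFinset with hCdef
  have hCS : ∀ k, ((C k : Finset V) : Set V) = S k := fun k => Set.Finite.coe_toFinset _
  have hmemC : ∀ (k) (v : V), v ∈ C k ↔ v ∈ S k := fun k v => Set.Finite.mem_toFinset _
  refine ⟨r, C, hr, ?_, ?_, ?_, ?_, ?_⟩
  · intro k
    obtain ⟨x, hx⟩ := (e.symm k).exists_rep
    exact ⟨x.1, (hmemC k x.1).2 ⟨x, hx, rfl⟩⟩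
  · intro k
    rw [hCS k]
    exact comp_induce_connected G W (e.symm k)
  · intro j k hjk
    rw [Finset.disjoint_left]
    intro v hvj hvk
    obtain ⟨x, hx, hxv⟩ := (hmemC j v).1 hvj
    obtain ⟨y, hy, hyv⟩ := (hmemC k v).1 hvk
    have hxy : x = y := Subtype.ext (hxv.trans hyv.symm)
    rw [SimpleGraph.ConnectedComponent.mem_supp_iff] at hx hy
    rw [hxy] at hx
    exact hjk (e.symm.injective (hx.symm.trans hy))
  · intro j k hjk u hu v hv hadj
    obtain ⟨x, hx, hxu⟩ := (hmemC j u).1 hu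
    obtain ⟨y, hy, hyv⟩ := (hmemC k v).1 hv
    have hadj' : GM.Adj x y := by
      show G.Adj x.1 y.1
      rw [hxu, hyv]
      exact hadj
    rw [SimpleGraph.ConnectedComponent.mem_supp_iff] at hx hy
    have : GM.connectedComponentMk x = GM.connectedComponentMk y :=
      SimpleGraph.ConnectedComponent.connectedComponentMk_eq_of_adj hadj'
    rw [hx, hy] at this
    exact hjk (e.symm.injective this)
  · ext v
    simp only [Finset.mem_biUnion, Finset.mem_univ, true_and]
    constructor
    · intro hv
      refine ⟨e (GM.connectedComponentMk ⟨v, hv⟩), (hmemC _ v).2 ?_⟩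
      exact ⟨⟨v, hv⟩, by simp, rfl⟩
    · intro ⟨k, hk⟩
      obtain ⟨x, _, hxv⟩ := (hmemC k v).1 hk
      exact hxv ▸ x.2
lemma forward (G : SimpleGraph V) (p : ((v : V) → Fin (b v)) → ℝ) (hpos : ∀ k, 0 < p k)
    (r : ℕ) (C : Fin r → Finset V) (hr : 2 ≤ r) (hne : ∀ k, (C k).Nonempty)
    (hdis : ∀ j k, j ≠ k → Disjoint (C j) (C k)) (M : Finset V)
    (hM : M = Finset.univ.biUnion C)
    (hfac : ∀ i, marg p M i = ∏ k, marg p (C k) i) :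
    ∀ i, mlogit hb p M i = 0 := by
  intro i
  rw [mlogit_eq_mob]
  have hlog : ∀ j, Real.log (marg p M j) = ∑ k, Real.log (marg p (C k) j) := by
    intro j
    rw [hfac j, Real.log_prod]
    intro k _
    exact ne_of_gt (marg_pos hpos _ _)
  rw [mob_congr_fun hb hlog M i, mob_sum]
  refine Finset.sum_eq_zero fun k _ => ?_
  have : Nontrivial (Fin r) := Fin.nontrivial_iff_two_le.2 hr
  obtain ⟨k', hk'⟩ := exists_ne k
  obtain ⟨v, hv⟩ := hne k'
  have hvM : v ∈ M := by
    rw [hM]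
    exact Finset.mem_biUnion.2 ⟨k', Finset.mem_univ _, hv⟩
  have hvC : v ∉ C k := Finset.disjoint_left.1 (hdis k' k hk') hv
  exact mob_eq_zero hb (fun j j' hjj => by rw [marg_congr hjj]) hvM hvC i

end aux

/-- The connected set Markov property for a graph `G`: for every disconnected vertex set
`D` with connected components `C 0, ..., C (r-1)` (a family of at least two nonempty,
pairwise disjoint connected sets covering `D` with no edges of `G` between distinct
members), the marginal over `D` factorizes into the product of the marginals over the
components. -/
def CSMP {V : Type*} [Fintype V] [DecidableEq V] {b : V → ℕ} (G : SimpleGraph V)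
    (p : ((v : V) → Fin (b v)) → ℝ) : Prop :=
  ∀ (D : Finset V) (r : ℕ) (C : Fin r → Finset V), 2 ≤ r →
    (∀ k, (C k).Nonempty) →
    (∀ k, (G.induce ((C k : Finset V) : Set V)).Connected) →
    (∀ j k, j ≠ k → Disjoint (C j) (C k)) →
    (∀ j k, j ≠ k → ∀ u ∈ C j, ∀ v ∈ C k, ¬ G.Adj u v) →
    D = Finset.univ.biUnion C →
    ∀ i, marg p D i = ∏ k, marg p (C k) i

/-- a strictly positive distribution satisfies the connected set Markov
property for `G` iff its multivariate logistic parameters `η^M` vanish for every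
disconnected set `M` of `G`. -/
theorem stmt12 {V : Type*} [Fintype V] [DecidableEq V] {b : V → ℕ} (hb : ∀ v, 0 < b v)
    (G : SimpleGraph V) (p : ((v : V) → Fin (b v)) → ℝ)
    (hpos : ∀ i, 0 < p i) (hsum : ∑ i, p i = 1) :
    CSMP G p ↔
      (∀ M : Finset V, ((M : Set V)).Nonempty → ¬ (G.induce ((M : Finset V) : Set V)).Connected →
        ∀ i, mlogit hb p M i = 0) := by
  constructor
  · intro hcsmp M hMne hMnc i
    obtain ⟨r, C, hr, hne, hconn, hdis, hadj, hMeq⟩ := components_exist G M hMne hMnc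
    exact forward hb G p hpos r C hr hne hdis M hMeq
      (hcsmp M r C hr hne hconn hdis hadj hMeq) i
  · intro Hη D r C hr hne hconn hdis hadj hD i
    rw [hD]
    exact backward hb G p hpos hsum Hη r C hr hne hdis hadj i
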